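/- Let H be a real Hilbert space, f = f₁ − f₂ : H → ℝ a DC function with global codifferential [d̲f(x*), d̄f(x*)] at a point x* ∈ H, and C ⊆ d̄f(x*) a nonempty set with d̄f(x*) = cl conv C. Then x* is a global minimizer of f if and only if for every z ∈ C there exists ξ(z) ≥ 0 such that (ξ(z), 0) ∈ d̲f(x*) + z. -/

import Mathlib

/-- Key lemma: if `S` is a closed convex set of (intercept, slope) pairs whose pointwise
supremum of affine functions is `f` (expressed via an upper-bound property and a minorant
property), then every affine global minorant of `f` with slope `w` is dominated by some
element of `S` with slope exactly `w`. -/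
theorem key_support_lemma {H : Type*} [NormedAddCommGroup H] [InnerProductSpace ℝ H]
    [CompleteSpace H] (S : Set (ℝ × H)) (f : H → ℝ)
    (hSc : IsClosed S) (hSv : Convex ℝ S) (hSne : S.Nonempty)
    (hmin : ∀ p ∈ S, ∀ x : H, p.1 + (inner ℝ p.2 x : ℝ) ≤ f x)
    (hub : ∀ (x : H) (M : ℝ), (∀ p ∈ S, p.1 + (inner ℝ p.2 x : ℝ) ≤ M) → f x ≤ M)
    (c : ℝ) (w : H) (hmino : ∀ x : H, c + (inner ℝ w x : ℝ) ≤ f x) :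
    ∃ a : ℝ, c ≤ a ∧ (a, w) ∈ S := by
  by_contra hcon
  push_neg at hcon
  -- the downward completion of S
  set S' : Set (ℝ × H) := {q | ∃ b : ℝ, q.1 ≤ b ∧ (b, q.2) ∈ S} with hS'def
  have hS'v : Convex ℝ S' := by
    rintro ⟨a₁, v₁⟩ ⟨b₁, hab₁, hb₁⟩ ⟨a₂, v₂⟩ ⟨b₂, hab₂, hb₂⟩ t s ht hs hts
    refine ⟨t * b₁ + s * b₂, ?_, ?_⟩
    · show t * a₁ + s * a₂ ≤ t * b₁ + s * b₂
      have := mul_le_mul_of_nonneg_left hab₁ ht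
      have := mul_le_mul_of_nonneg_left hab₂ hs
      linarith
    · have h := hSv hb₁ hb₂ ht hs hts
      simpa [Prod.smul_mk, Prod.mk_add_mk] using h
  have hS'c : IsClosed S' := by
    apply IsSeqClosed.isClosed
    intro q q₀ hq hlim
    choose b hb hbS using hq
    have hbub : ∀ n, b n ≤ f 0 := by
      intro n
      have := hmin _ (hbS n) 0
      simpa using this
    have hq1lim : Filter.Tendsto (fun n => (q n).1) Filter.atTop (nhds q₀.1) :=
      (continuous_fst.tendsto q₀).comp hlim
    obtain ⟨m, hm⟩ := hq1lim.bddBelow_range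
    have hbmem : ∀ n, b n ∈ Set.Icc m (f 0) := fun n =>
      ⟨le_trans (hm ⟨n, rfl⟩) (hb n), hbub n⟩
    obtain ⟨L, _, ψ, hψ, hLlim⟩ := isCompact_Icc.tendsto_subseq hbmem
    have hqψ : Filter.Tendsto (fun n => q (ψ n)) Filter.atTop (nhds q₀) :=
      hlim.comp hψ.tendsto_atTop
    have hpair : Filter.Tendsto (fun n => ((b ∘ ψ) n, (q (ψ n)).2)) Filter.atTop
        (nhds (L, q₀.2)) :=
      Filter.Tendsto.prodMk_nhds hLlim ((continuous_snd.tendsto q₀).comp hqψ)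
    have hLS : (L, q₀.2) ∈ S :=
      hSc.mem_of_tendsto hpair (Filter.Eventually.of_forall fun n => hbS (ψ n))
    refine ⟨L, ?_, hLS⟩
    exact le_of_tendsto_of_tendsto' ((continuous_fst.tendsto q₀).comp hqψ) hLlim
      (fun n => hb (ψ n))
  have hnotin : ((c, w) : ℝ × H) ∉ S' := by
    rintro ⟨b, hcb, hbS⟩
    exact hcon b hcb hbS
  obtain ⟨φ, u, hφlt, hφgt⟩ := geometric_hahn_banach_closed_point hS'v hS'c hnotin
  set r : ℝ := φ (1, 0) with hr_def
  set G : H →L[ℝ] ℝ := φ.comp (ContinuousLinearMap.inr ℝ ℝ H) with hG_def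
  have hφeq : ∀ (a : ℝ) (v : H), φ (a, v) = a * r + G v := by
    intro a v
    have h1 : ((a, v) : ℝ × H) = a • ((1 : ℝ), (0 : H)) + ((0 : ℝ), v) := by
      simp [Prod.ext_iff]
    rw [h1, map_add, map_smul]
    simp [hr_def, hG_def, smul_eq_mul]
  set y : H := (InnerProductSpace.toDual ℝ H).symm G with hy
  have hyv : ∀ v : H, (inner ℝ v y : ℝ) = G v := by
    intro v
    rw [real_inner_comm]
    exact InnerProductSpace.toDual_symm_apply
  have hSsub : ∀ p ∈ S, p ∈ S' := fun p hp => ⟨p.1, le_refl _, hp⟩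
  rcases lt_trichotomy r 0 with hr | hr | hr
  · -- r < 0 : impossible since S' contains downward rays
    obtain ⟨⟨a₀, v₀⟩, h₀⟩ := hSne
    set t : ℝ := max 0 (a₀ - (u + 1 - G v₀) / r) with ht_def
    have ht0 : 0 ≤ t := le_max_left _ _
    have hmem : ((a₀ - t, v₀) : ℝ × H) ∈ S' := ⟨a₀, by show a₀ - t ≤ a₀; linarith, h₀⟩
    have hlt := hφlt _ hmem
    rw [hφeq] at hlt
    have htge : a₀ - (u + 1 - G v₀) / r ≤ t := le_max_right _ _
    have h1 : a₀ - t ≤ (u + 1 - G v₀) / r := by linarith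
    have h2 : u + 1 - G v₀ ≤ (a₀ - t) * r := by
      have h3 := mul_le_mul_of_nonpos_right h1 (le_of_lt hr)
      rwa [div_mul_cancel₀ _ (ne_of_lt hr)] at h3
    linarith
  · -- r = 0 : separation in slope directions, contradicts minorant at far points
    have hgw : u < G w := by
      have h1 := hφgt
      rw [hφeq] at h1
      simpa [hr] using h1
    have hfc : c ≤ f 0 := by
      have := hmino 0
      simpa using this
    set t : ℝ := (f 0 - c + 1) / (G w - u) with ht_def
    have hwu : (0 : ℝ) < G w - u := by linarith
    have ht : 0 < t := div_pos (by linarith) hwu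
    have hft : f (t • y) ≤ f 0 + t * u := by
      apply hub
      intro p hp
      have h1 : p.1 ≤ f 0 := by
        have := hmin p hp 0
        simpa using this
      have h2 : G p.2 < u := by
        have h3 := hφlt p (hSsub p hp)
        rw [show (p : ℝ × H) = (p.1, p.2) from rfl, hφeq] at h3
        simpa [hr] using h3
      have h3 : (inner ℝ p.2 (t • y) : ℝ) = t * G p.2 := by
        rw [real_inner_smul_right, hyv]
      rw [h3]
      nlinarith
    have h4 : (inner ℝ w (t • y) : ℝ) = t * G w := by
      rw [real_inner_smul_right, hyv]
    have h5 := hmino (t • y)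
    rw [h4] at h5
    have h6 : t * (G w - u) = f 0 - c + 1 := by
      rw [ht_def]
      field_simp
    nlinarith
  · -- r > 0 : evaluate at x = r⁻¹ • y to contradict f = sup
    set x : H := r⁻¹ • y with hx
    have hfx : f x ≤ u / r := by
      apply hub
      intro p hp
      have h2 : p.1 * r + G p.2 < u := by
        have h3 := hφlt p (hSsub p hp)
        rwa [show (p : ℝ × H) = (p.1, p.2) from rfl, hφeq] at h3
      have h3 : (inner ℝ p.2 x : ℝ) = r⁻¹ * G p.2 := by
        rw [hx, real_inner_smul_right, hyv]
      have h4 : p.1 + r⁻¹ * G p.2 = (p.1 * r + G p.2) / r := by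
        field_simp
      rw [h3, h4]
      exact (div_le_div_iff_of_pos_right hr).mpr h2.le
    have h5 : (inner ℝ w x : ℝ) = r⁻¹ * G w := by
      rw [hx, real_inner_smul_right, hyv]
    have h6 := hmino x
    rw [h5] at h6
    have h7 : u < c * r + G w := by
      have h8 := hφgt
      rw [hφeq] at h8
      linarith
    have h8 : u / r < c + r⁻¹ * G w := by
      rw [div_lt_iff₀ hr]
      have h9 : (c + r⁻¹ * G w) * r = c * r + G w := by
        field_simp
      linarith
    linarith

/-- x* is a global minimizer of the DC function f = f₁ − f₂ iff for every
z ∈ C there is ξ(z) ≥ 0 with (ξ(z), 0) ∈ d̲f(x*) + z. -/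
theorem global_optimality_via_codifferential_alternative
    {H : Type*} [NormedAddCommGroup H] [InnerProductSpace ℝ H] [CompleteSpace H]
    (f₁ f₂ : H → ℝ) (S₁ S₂ : Set (ℝ × H))
    (hconv₁ : ConvexOn ℝ Set.univ f₁) (hconv₂ : ConvexOn ℝ Set.univ f₂)
    (hlsc₁ : LowerSemicontinuous f₁) (hlsc₂ : LowerSemicontinuous f₂)
    (hSclosed₁ : IsClosed S₁) (hSconv₁ : Convex ℝ S₁)
    (hSclosed₂ : IsClosed S₂) (hSconv₂ : Convex ℝ S₂)
    (hrep₁ : ∀ x, ((f₁ x : ℝ) : EReal) = ⨆ p ∈ S₁, ((p.1 + inner ℝ p.2 x : ℝ) : EReal))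
    (hrep₂ : ∀ x, ((f₂ x : ℝ) : EReal) = ⨆ p ∈ S₂, ((p.1 + inner ℝ p.2 x : ℝ) : EReal))
    (xs : H) (dl du : Set (ℝ × H))
    (hdl : dl = {q : ℝ × H | ∃ p ∈ S₁, q = (p.1 - f₁ xs + inner ℝ p.2 xs, p.2)})
    (hdu : du = {q : ℝ × H | ∃ p ∈ S₂, q = (-p.1 + f₂ xs - inner ℝ p.2 xs, -p.2)})
    (C : Set (ℝ × H)) (hCne : C.Nonempty) (hC : C ⊆ du)
    (hCgen : du = closure (convexHull ℝ C)) :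
    (∀ x, f₁ xs - f₂ xs ≤ f₁ x - f₂ x)
      ↔ ∀ z ∈ C, ∃ ξ : ℝ, 0 ≤ ξ ∧ ∃ p ∈ dl, p + z = ((ξ, (0 : H)) : ℝ × H) := by
  have hmin₁ : ∀ p ∈ S₁, ∀ x : H, p.1 + (inner ℝ p.2 x : ℝ) ≤ f₁ x := by
    intro p hp x
    have h1 : ((p.1 + inner ℝ p.2 x : ℝ) : EReal) ≤ ((f₁ x : ℝ) : EReal) := by
      rw [hrep₁ x]
      exact le_iSup₂ (f := fun (q : ℝ × H) (_ : q ∈ S₁) =>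
        ((q.1 + inner ℝ q.2 x : ℝ) : EReal)) p hp
    exact_mod_cast h1
  have hmin₂ : ∀ p ∈ S₂, ∀ x : H, p.1 + (inner ℝ p.2 x : ℝ) ≤ f₂ x := by
    intro p hp x
    have h1 : ((p.1 + inner ℝ p.2 x : ℝ) : EReal) ≤ ((f₂ x : ℝ) : EReal) := by
      rw [hrep₂ x]
      exact le_iSup₂ (f := fun (q : ℝ × H) (_ : q ∈ S₂) =>
        ((q.1 + inner ℝ q.2 x : ℝ) : EReal)) p hp
    exact_mod_cast h1
  have hub₁ : ∀ (x : H) (M : ℝ), (∀ p ∈ S₁, p.1 + (inner ℝ p.2 x : ℝ) ≤ M) → f₁ x ≤ M := by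
    intro x M hM
    have h1 : ((f₁ x : ℝ) : EReal) ≤ ((M : ℝ) : EReal) := by
      rw [hrep₁ x]
      exact iSup₂_le fun p hp => EReal.coe_le_coe_iff.mpr (hM p hp)
    exact_mod_cast h1
  have hub₂ : ∀ (x : H) (M : ℝ), (∀ p ∈ S₂, p.1 + (inner ℝ p.2 x : ℝ) ≤ M) → f₂ x ≤ M := by
    intro x M hM
    have h1 : ((f₂ x : ℝ) : EReal) ≤ ((M : ℝ) : EReal) := by
      rw [hrep₂ x]
      exact iSup₂_le fun p hp => EReal.coe_le_coe_iff.mpr (hM p hp)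
    exact_mod_cast h1
  have hne₁ : S₁.Nonempty := by
    rcases Set.eq_empty_or_nonempty S₁ with h | h
    · exfalso
      have h1 := hrep₁ 0
      rw [h] at h1
      simp at h1
    · exact h
  constructor
  · -- global minimality ⟹ condition
    intro hglob z hzC
    have hzdu : z ∈ du := hC hzC
    rw [hdu] at hzdu
    obtain ⟨p₂, hp₂, hz⟩ := hzdu
    have hminor : ∀ x : H, (p₂.1 + f₁ xs - f₂ xs) + (inner ℝ p₂.2 x : ℝ) ≤ f₁ x := by
      intro x
      have h1 := hmin₂ p₂ hp₂ x
      have h2 := hglob x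
      linarith
    obtain ⟨a, hca, haS⟩ := key_support_lemma S₁ f₁ hSclosed₁ hSconv₁ hne₁ hmin₁ hub₁
      (p₂.1 + f₁ xs - f₂ xs) p₂.2 hminor
    refine ⟨a - (p₂.1 + f₁ xs - f₂ xs), by linarith,
      (a - f₁ xs + inner ℝ p₂.2 xs, p₂.2), ?_, ?_⟩
    · rw [hdl]
      exact ⟨(a, p₂.2), haS, rfl⟩
    · rw [hz, Prod.mk_add_mk]
      simp only [Prod.mk.injEq]
      constructor
      · ring
      · simp
  · -- condition ⟹ global minimality
    intro hcond x
    set K : ℝ := f₁ x - f₁ xs with hK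
    set A : Set (ℝ × H) := {z | 0 ≤ z.1 + inner ℝ z.2 (x - xs) + K} with hA
    have hAclosed : IsClosed A := by
      have hcont : Continuous fun z : ℝ × H => z.1 + (inner ℝ z.2 (x - xs) : ℝ) + K :=
        (continuous_fst.add (continuous_snd.inner continuous_const)).add continuous_const
      exact isClosed_le continuous_const hcont
    have hAconv : Convex ℝ A := by
      rintro z₁ h₁ z₂ h₂ t s ht hs hts
      simp only [hA, Set.mem_setOf_eq] at h₁ h₂ ⊢
      have e1 : (t • z₁ + s • z₂).1 = t * z₁.1 + s * z₂.1 := rfl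
      have e2 : (inner ℝ (t • z₁ + s • z₂).2 (x - xs) : ℝ)
          = t * inner ℝ z₁.2 (x - xs) + s * inner ℝ z₂.2 (x - xs) := by
        simp [inner_add_left, real_inner_smul_left]
      rw [e1, e2]
      have hk : t * K + s * K = K := by rw [← add_mul, hts, one_mul]
      nlinarith [mul_le_mul_of_nonneg_left h₁ ht, mul_le_mul_of_nonneg_left h₂ hs, hk]
    have hCA : C ⊆ A := by
      intro z hzC
      obtain ⟨ξ, hξ, p, hpdl, hpz⟩ := hcond z hzC
      rw [hdl] at hpdl
      obtain ⟨p₁, hp₁, hpe⟩ := hpdl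
      rw [hpe] at hpz
      have h2 : p₁.1 - f₁ xs + (inner ℝ p₁.2 xs : ℝ) + z.1 = ξ := by
        have := congrArg Prod.fst hpz
        simpa using this
      have h3 : p₁.2 = -z.2 := by
        have h4 : p₁.2 + z.2 = 0 := by
          have := congrArg Prod.snd hpz
          simpa using this
        exact eq_neg_of_add_eq_zero_left h4
      have h1 := hmin₁ p₁ hp₁ x
      rw [h3, inner_neg_left] at h1
      rw [h3, inner_neg_left] at h2
      have h6 : (inner ℝ z.2 (x - xs) : ℝ) = inner ℝ z.2 x - inner ℝ z.2 xs :=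
        inner_sub_right _ _ _
      show (0 : ℝ) ≤ z.1 + inner ℝ z.2 (x - xs) + K
      rw [h6, hK]
      linarith
    have hduA : du ⊆ A := by
      rw [hCgen]
      exact closure_minimal (convexHull_min hCA hAconv) hAclosed
    have hf2 : f₂ x ≤ f₂ xs + K := by
      apply hub₂
      intro p hp
      have hzmem : ((-p.1 + f₂ xs - inner ℝ p.2 xs, -p.2) : ℝ × H) ∈ du := by
        rw [hdu]
        exact ⟨p, hp, rfl⟩
      have h1 := hduA hzmem
      simp only [hA, Set.mem_setOf_eq] at h1
      rw [inner_neg_left, inner_sub_right] at h1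
      linarith
    rw [hK] at hf2
    linarith
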